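/- Let U ⊆ ℝ^m and V ⊆ ℝ^ℓ be open, bounded, and convex sets, let k ≥ 0 be an integer, and let ψ : V → ℝ^p be of class C^{k+1} with ‖ψ‖_{C^{k+1}} := max_{0≤j≤k+1} sup_{y∈V} ‖d^j ψ(y)‖ < ∞. Then for every R > 0 there exists a constant C = C(k,R) > 0 such that for all maps φ₁, φ₂ : U → V of class C^k with ‖φ_i‖_{C^k} := max_{0≤j≤k} sup_{x∈U} ‖d^j φ_i(x)‖ ≤ R (i = 1,2), one has ‖ψ∘φ₁ − ψ∘φ₂‖_{C^k} ≤ C · ‖ψ‖_{C^{k+1}} · ‖φ₁ − φ₂‖_{C^k}. -/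

import Mathlib

open OrderedFinpartition in
lemma aux_compAlong_norm_le {E F G : Type*} [NormedAddCommGroup E] [NormedSpace ℝ E]
    [NormedAddCommGroup F] [NormedSpace ℝ F] [NormedAddCommGroup G] [NormedSpace ℝ G]
    {n : ℕ} (c : OrderedFinpartition n)
    (f : ContinuousMultilinearMap ℝ (fun _ : Fin c.length ↦ F) G)
    (p : ∀ i, ContinuousMultilinearMap ℝ (fun _ : Fin (c.partSize i) ↦ E) F) :
    ‖c.compAlongOrderedFinpartition f p‖ ≤ ‖f‖ * ∏ i, ‖p i‖ := by
  apply ContinuousMultilinearMap.opNorm_le_bound (by positivity) (fun v ↦ ?_)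
  simp only [compAlongOrderFinpartition_apply]
  apply (f.le_opNorm _).trans
  rw [mul_assoc, ← c.prod_sigma_eq_prod, ← Finset.prod_mul_distrib]
  gcongr with m _
  exact (p m).le_opNorm _

open OrderedFinpartition in
lemma aux_compAlong_sub {E F G : Type*} [NormedAddCommGroup E] [NormedSpace ℝ E]
    [NormedAddCommGroup F] [NormedSpace ℝ F] [NormedAddCommGroup G] [NormedSpace ℝ G]
    {n K : ℕ} (c : OrderedFinpartition n)
    (f₁ f₂ : ContinuousMultilinearMap ℝ (fun _ : Fin c.length ↦ F) G)
    (p₁ p₂ : ∀ i, ContinuousMultilinearMap ℝ (fun _ : Fin (c.partSize i) ↦ E) F)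
    {Mf D R' : ℝ}
    (hMf0 : 0 ≤ Mf) (hD : 0 ≤ D) (hR' : 1 ≤ R') (hnK : n ≤ K)
    (hf₂ : ‖f₂‖ ≤ Mf) (hfd : ‖f₁ - f₂‖ ≤ Mf * D)
    (hp₁ : ∀ i, ‖p₁ i‖ ≤ R') (hp₂ : ∀ i, ‖p₂ i‖ ≤ R')
    (hpd : ∀ i, ‖p₁ i - p₂ i‖ ≤ D) :
    ‖c.compAlongOrderedFinpartition f₁ p₁ - c.compAlongOrderedFinpartition f₂ p₂‖
      ≤ ((K : ℝ) + 1) * R' ^ K * (Mf * D) := by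
  have hR'0 : (0:ℝ) ≤ R' := zero_le_one.trans hR'
  have hlen : c.length ≤ K := c.length_le.trans hnK
  set T := c.compAlongOrderedFinpartitionL ℝ E F G with hT
  have key : c.compAlongOrderedFinpartition f₁ p₁ - c.compAlongOrderedFinpartition f₂ p₂
      = c.compAlongOrderedFinpartition (f₁ - f₂) p₁ + (T f₂ p₁ - T f₂ p₂) := by
    ext v
    simp only [hT, compAlongOrderedFinpartitionL_apply, ContinuousMultilinearMap.sub_apply,
      ContinuousMultilinearMap.add_apply, compAlongOrderFinpartition_apply]
    abel
  have hTf₂ : ‖T f₂‖ ≤ Mf := by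
    apply ContinuousMultilinearMap.opNorm_le_bound hMf0 (fun q ↦ ?_)
    exact (aux_compAlong_norm_le c f₂ q).trans
      (mul_le_mul_of_nonneg_right hf₂ (Finset.prod_nonneg fun i _ => norm_nonneg _))
  have hp₁' : ‖p₁‖ ≤ R' := (pi_norm_le_iff_of_nonneg hR'0).2 hp₁
  have hp₂' : ‖p₂‖ ≤ R' := (pi_norm_le_iff_of_nonneg hR'0).2 hp₂
  have hpd' : ‖p₁ - p₂‖ ≤ D := by
    refine (pi_norm_le_iff_of_nonneg hD).2 (fun i ↦ ?_)
    simpa using hpd i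
  have h1 : ‖c.compAlongOrderedFinpartition (f₁ - f₂) p₁‖ ≤ Mf * D * R' ^ K := by
    refine (aux_compAlong_norm_le c _ _).trans ?_
    have : ∏ i, ‖p₁ i‖ ≤ R' ^ K := by
      calc ∏ i, ‖p₁ i‖ ≤ ∏ _i : Fin c.length, R' :=
            Finset.prod_le_prod (fun i _ ↦ norm_nonneg _) (fun i _ ↦ hp₁ i)
        _ = R' ^ c.length := by simp
        _ ≤ R' ^ K := pow_le_pow_right₀ hR' hlen
    calc ‖f₁ - f₂‖ * ∏ i, ‖p₁ i‖ ≤ (Mf * D) * R' ^ K := by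
          apply mul_le_mul hfd this (Finset.prod_nonneg fun i _ ↦ norm_nonneg _) (by positivity)
      _ = Mf * D * R' ^ K := by ring
  have h2 : ‖T f₂ p₁ - T f₂ p₂‖ ≤ Mf * K * R' ^ K * D := by
    refine ((T f₂).norm_image_sub_le p₁ p₂).trans ?_
    have hmax : max ‖p₁‖ ‖p₂‖ ^ (Fintype.card (Fin c.length) - 1) ≤ R' ^ K := by
      calc max ‖p₁‖ ‖p₂‖ ^ (Fintype.card (Fin c.length) - 1)
          ≤ R' ^ (Fintype.card (Fin c.length) - 1) :=
            pow_le_pow_left₀ (le_max_iff.2 (Or.inl (norm_nonneg _))) (max_le hp₁' hp₂') _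
        _ ≤ R' ^ K := pow_le_pow_right₀ hR' (by simp; omega)
    have hcard : (Fintype.card (Fin c.length) : ℝ) ≤ (K : ℝ) := by
      simp only [Fintype.card_fin]; exact_mod_cast hlen
    exact mul_le_mul (mul_le_mul (mul_le_mul hTf₂ hcard (by positivity) hMf0) hmax
      (by positivity) (by positivity)) hpd' (norm_nonneg _) (by positivity)
  calc ‖c.compAlongOrderedFinpartition f₁ p₁ - c.compAlongOrderedFinpartition f₂ p₂‖
      ≤ ‖c.compAlongOrderedFinpartition (f₁ - f₂) p₁‖ + ‖T f₂ p₁ - T f₂ p₂‖ := by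
        rw [key]; exact norm_add_le _ _
    _ ≤ Mf * D * R' ^ K + Mf * K * R' ^ K * D := add_le_add h1 h2
    _ = ((K : ℝ) + 1) * R' ^ K * (Mf * D) := by ring

theorem stmt18 (m l p k : ℕ) (U : Set (Fin m → ℝ)) (V : Set (Fin l → ℝ))
    (hUo : IsOpen U) (hUb : Bornology.IsBounded U) (hUc : Convex ℝ U)
    (hVo : IsOpen V) (hVb : Bornology.IsBounded V) (hVc : Convex ℝ V)
    (ψ : (Fin l → ℝ) → (Fin p → ℝ)) (hψ : ContDiffOn ℝ (k + 1) ψ V)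
    (Mψ : ℝ)
    (hMψ : ∀ j : ℕ, j ≤ k + 1 → ∀ y ∈ V, ‖iteratedFDerivWithin ℝ j ψ V y‖ ≤ Mψ)
    (R : ℝ) (hR : 0 < R) :
    ∃ C > 0, ∀ φ₁ φ₂ : (Fin m → ℝ) → (Fin l → ℝ),
      ContDiffOn ℝ k φ₁ U → ContDiffOn ℝ k φ₂ U →
      Set.MapsTo φ₁ U V → Set.MapsTo φ₂ U V →
      (∀ j : ℕ, j ≤ k → ∀ x ∈ U, ‖iteratedFDerivWithin ℝ j φ₁ U x‖ ≤ R) →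
      (∀ j : ℕ, j ≤ k → ∀ x ∈ U, ‖iteratedFDerivWithin ℝ j φ₂ U x‖ ≤ R) →
      ∀ D : ℝ,
      (∀ j : ℕ, j ≤ k → ∀ x ∈ U,
        ‖iteratedFDerivWithin ℝ j φ₁ U x - iteratedFDerivWithin ℝ j φ₂ U x‖ ≤ D) →
      ∀ j : ℕ, j ≤ k → ∀ x ∈ U,
        ‖iteratedFDerivWithin ℝ j (fun t => ψ (φ₁ t) - ψ (φ₂ t)) U x‖ ≤ C * Mψ * D := by
  classical
  set R' : ℝ := max R 1 with hR'def
  have hR'1 : (1:ℝ) ≤ R' := le_max_right _ _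
  have hR'0 : (0:ℝ) < R' := lt_of_lt_of_le one_pos hR'1
  set N : ℕ := ∑ i ∈ Finset.range (k + 1), Fintype.card (OrderedFinpartition i) with hNdef
  refine ⟨((N : ℝ) + 1) * (((k : ℝ) + 1) * R' ^ k), by positivity, ?_⟩
  intro φ₁ φ₂ hφ₁ hφ₂ hm₁ hm₂ hb₁ hb₂ D hD j hj x hx
  have hUu : UniqueDiffOn ℝ U := hUo.uniqueDiffOn
  have hVu : UniqueDiffOn ℝ V := hVo.uniqueDiffOn
  have hMψ0 : 0 ≤ Mψ := (norm_nonneg _).trans (hMψ 0 (by omega) _ (hm₁ hx))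
  have hD0 : 0 ≤ D := (norm_nonneg _).trans (hD 0 (by omega) x hx)
  have hψk : ContDiffOn ℝ k ψ V := hψ.of_le (by exact_mod_cast Nat.le_succ k)
  -- the composed functions
  have hT1 : HasFTaylorSeriesUpToOn k (ψ ∘ φ₁)
      (fun y ↦ (ftaylorSeriesWithin ℝ ψ V (φ₁ y)).taylorComp (ftaylorSeriesWithin ℝ φ₁ U y)) U :=
    (hψk.ftaylorSeriesWithin hVu).comp (hφ₁.ftaylorSeriesWithin hUu) hm₁
  have hT2 : HasFTaylorSeriesUpToOn k (ψ ∘ φ₂)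
      (fun y ↦ (ftaylorSeriesWithin ℝ ψ V (φ₂ y)).taylorComp (ftaylorSeriesWithin ℝ φ₂ U y)) U :=
    (hψk.ftaylorSeriesWithin hVu).comp (hφ₂.ftaylorSeriesWithin hUu) hm₂
  have e1 : iteratedFDerivWithin ℝ j (ψ ∘ φ₁) U x
      = (ftaylorSeriesWithin ℝ ψ V (φ₁ x)).taylorComp (ftaylorSeriesWithin ℝ φ₁ U x) j :=
    (hT1.eq_iteratedFDerivWithin_of_uniqueDiffOn (by exact_mod_cast hj) hUu hx).symm
  have e2 : iteratedFDerivWithin ℝ j (ψ ∘ φ₂) U x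
      = (ftaylorSeriesWithin ℝ ψ V (φ₂ x)).taylorComp (ftaylorSeriesWithin ℝ φ₂ U x) j :=
    (hT2.eq_iteratedFDerivWithin_of_uniqueDiffOn (by exact_mod_cast hj) hUu hx).symm
  have hc1 : ContDiffOn ℝ k (ψ ∘ φ₁) U := hψk.comp hφ₁ hm₁
  have hc2 : ContDiffOn ℝ k (ψ ∘ φ₂) U := hψk.comp hφ₂ hm₂
  -- difference of iterated derivatives
  have hsub : iteratedFDerivWithin ℝ j (fun t => ψ (φ₁ t) - ψ (φ₂ t)) U x
      = iteratedFDerivWithin ℝ j (ψ ∘ φ₁) U x - iteratedFDerivWithin ℝ j (ψ ∘ φ₂) U x := by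
    have heq : (fun t => ψ (φ₁ t) - ψ (φ₂ t))
        = (ψ ∘ φ₁) + (-(ψ ∘ φ₂)) := by
      ext t i; simp [sub_eq_add_neg]
    have hcj1 : ContDiffOn ℝ j (ψ ∘ φ₁) U :=
      hc1.of_le (show (j : WithTop ℕ∞) ≤ k by exact_mod_cast hj)
    have hcj2 : ContDiffOn ℝ j (-(ψ ∘ φ₂)) U :=
      (hc2.of_le (show (j : WithTop ℕ∞) ≤ k by exact_mod_cast hj)).neg
    rw [heq, iteratedFDerivWithin_add_apply (hcj1 x hx) (hcj2 x hx) hUu hx,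
      iteratedFDerivWithin_neg_apply hUu hx, sub_eq_add_neg]
  -- bound on the zeroth order difference
  have h0 : ‖φ₁ x - φ₂ x‖ ≤ D := by
    have h := hD 0 (Nat.zero_le k) x hx
    rwa [iteratedFDerivWithin_zero_eq_comp, iteratedFDerivWithin_zero_eq_comp,
      Function.comp_apply, Function.comp_apply, ← LinearIsometryEquiv.map_sub,
      LinearIsometryEquiv.norm_map] at h
  -- mean value bound on differences of derivatives of ψ
  have head : ∀ n : ℕ, n ≤ k →
      ‖iteratedFDerivWithin ℝ n ψ V (φ₁ x) - iteratedFDerivWithin ℝ n ψ V (φ₂ x)‖ ≤ Mψ * D := by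
    intro n hn
    have hderiv : ∀ y ∈ V, HasFDerivWithinAt (fun y => iteratedFDerivWithin ℝ n ψ V y)
        ((iteratedFDerivWithin ℝ (n + 1) ψ V y).curryLeft) V y := by
      intro y hy
      exact (hψ.ftaylorSeriesWithin hVu).fderivWithin n
        (by exact_mod_cast Nat.lt_succ_of_le hn) y hy
    have hb : ∀ y ∈ V, ‖(iteratedFDerivWithin ℝ (n + 1) ψ V y).curryLeft‖ ≤ Mψ := by
      intro y hy
      rw [ContinuousMultilinearMap.curryLeft_norm]
      exact hMψ (n + 1) (by omega) y hy
    calc ‖iteratedFDerivWithin ℝ n ψ V (φ₁ x) - iteratedFDerivWithin ℝ n ψ V (φ₂ x)‖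
        ≤ Mψ * ‖φ₁ x - φ₂ x‖ :=
          hVc.norm_image_sub_le_of_norm_hasFDerivWithin_le hderiv hb (hm₂ hx) (hm₁ hx)
      _ ≤ Mψ * D := mul_le_mul_of_nonneg_left h0 hMψ0
  -- per-partition bound
  have hterm : ∀ c : OrderedFinpartition j,
      ‖(ftaylorSeriesWithin ℝ ψ V (φ₁ x)).compAlongOrderedFinpartition
          (ftaylorSeriesWithin ℝ φ₁ U x) c -
        (ftaylorSeriesWithin ℝ ψ V (φ₂ x)).compAlongOrderedFinpartition
          (ftaylorSeriesWithin ℝ φ₂ U x) c‖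
        ≤ ((k : ℝ) + 1) * R' ^ k * (Mψ * D) := by
    intro c
    apply aux_compAlong_sub c _ _ _ _ hMψ0 hD0 hR'1 hj
    · exact hMψ c.length (by have := c.length_le; omega) _ (hm₂ hx)
    · exact head c.length (c.length_le.trans hj)
    · intro i
      exact (hb₁ (c.partSize i) ((c.partSize_le i).trans hj) x hx).trans (le_max_left _ _)
    · intro i
      exact (hb₂ (c.partSize i) ((c.partSize_le i).trans hj) x hx).trans (le_max_left _ _)
    · intro i
      exact hD (c.partSize i) ((c.partSize_le i).trans hj) x hx
  -- cardinality bound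
  have hcard : (Fintype.card (OrderedFinpartition j) : ℝ) ≤ (N : ℝ) + 1 := by
    have : Fintype.card (OrderedFinpartition j) ≤ N :=
      Finset.single_le_sum (f := fun i => Fintype.card (OrderedFinpartition i))
        (fun i _ => Nat.zero_le _) (Finset.mem_range.2 (by omega))
    exact_mod_cast this.trans (Nat.le_succ N)
  rw [hsub, e1, e2]
  calc ‖(ftaylorSeriesWithin ℝ ψ V (φ₁ x)).taylorComp (ftaylorSeriesWithin ℝ φ₁ U x) j -
        (ftaylorSeriesWithin ℝ ψ V (φ₂ x)).taylorComp (ftaylorSeriesWithin ℝ φ₂ U x) j‖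
      = ‖∑ c : OrderedFinpartition j,
          ((ftaylorSeriesWithin ℝ ψ V (φ₁ x)).compAlongOrderedFinpartition
            (ftaylorSeriesWithin ℝ φ₁ U x) c -
          (ftaylorSeriesWithin ℝ ψ V (φ₂ x)).compAlongOrderedFinpartition
            (ftaylorSeriesWithin ℝ φ₂ U x) c)‖ := by
        rw [Finset.sum_sub_distrib]; rfl
    _ ≤ ∑ c : OrderedFinpartition j, ((k : ℝ) + 1) * R' ^ k * (Mψ * D) := by
        refine (norm_sum_le _ _).trans (Finset.sum_le_sum fun c _ => hterm c)
    _ = (Fintype.card (OrderedFinpartition j) : ℝ) * (((k : ℝ) + 1) * R' ^ k * (Mψ * D)) := by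
        rw [Finset.sum_const, nsmul_eq_mul, Finset.card_univ]
    _ ≤ ((N : ℝ) + 1) * (((k : ℝ) + 1) * R' ^ k * (Mψ * D)) := by
        apply mul_le_mul_of_nonneg_right hcard (by positivity)
    _ = ((N : ℝ) + 1) * (((k : ℝ) + 1) * R' ^ k) * Mψ * D := by ring
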